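/- For 0 ≤ k ≤ n and r, s ≥ 0 with r + s ≤ n − k, let ζ = diag(1_r, −1_s, 0_{n−k−r−s}) and let V^{(k;r,s)} ⊆ ℝ^{2n} be the subspace {(−ζ·v₁, v₂, v₁, 0) : v₁ ∈ ℝ^{n−k}, v₂ ∈ ℝ^k} (coordinates in blocks of sizes n−k, k, n−k, k). Then each V^{(k;r,s)} is a Lagrangian subspace of (ℝ^{2n}, ω), and every Lagrangian subspace λ of (ℝ^{2n}, ω) lies in the L-orbit of some V^{(k;r,s)}: there exist 0 ≤ k ≤ n, r, s ≥ 0 with r + s ≤ n − k, and a ∈ GL_n(ℝ) such that ι(a)·λ = V^{(k;r,s)}. -/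

import Mathlib

open Matrix

/-- `Jₙ = [[0, -1ₙ], [1ₙ, 0]]`. -/
def JJ (n : ℕ) : Matrix (Fin n ⊕ Fin n) (Fin n ⊕ Fin n) ℝ :=
  Matrix.fromBlocks 0 (-1) 1 0

/-- A Lagrangian subspace of `(ℝ^{2n}, ω)`: an `n`-dimensional subspace on which the
symplectic form `ω(u,v) = ᵗu·Jₙ·v` vanishes identically. -/
def IsLagrangian (n : ℕ) (W : Submodule ℝ (Fin n ⊕ Fin n → ℝ)) : Prop :=
  Module.finrank ℝ W = n ∧ ∀ u ∈ W, ∀ v ∈ W, u ⬝ᵥ (JJ n).mulVec v = 0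

/-- `ι(a) = [[a, 0], [0, ᵗa⁻¹]]`. -/
noncomputable def iota (n : ℕ) (a : Matrix (Fin n) (Fin n) ℝ) :
    Matrix (Fin n ⊕ Fin n) (Fin n ⊕ Fin n) ℝ :=
  Matrix.fromBlocks a 0 0 (aᵀ)⁻¹

/-- `ζ = diag(1_r, -1_s, 0, …, 0)` (an `n × n` matrix; only the first `n-k` diagonal
entries are nonzero when `r + s ≤ n - k`). -/
def zetaMat (n r s : ℕ) : Matrix (Fin n) (Fin n) ℝ :=
  Matrix.diagonal fun i => if (i : ℕ) < r then 1 else if (i : ℕ) < r + s then -1 else 0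

/-- The subspace `V^{(k;r,s)} = {(-ζ·v₁, v₂, v₁, 0) : v₁ ∈ ℝ^{n-k}, v₂ ∈ ℝ^k} ⊆ ℝ^{2n}`,
realized as the range of the linear map `v ↦ ((-ζ·v on the first n-k coordinates, v on
the last k coordinates), (v on the first n-k coordinates, 0))`. -/
def Vkrs (n k r s : ℕ) : Submodule ℝ (Fin n ⊕ Fin n → ℝ) :=
  LinearMap.range (Matrix.mulVecLin (Matrix.fromRows
    (Matrix.of fun (i j : Fin n) => if (i : ℕ) < n - k then -(zetaMat n r s i j)
      else (1 : Matrix (Fin n) (Fin n) ℝ) i j)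
    (Matrix.of fun (i j : Fin n) => if (i : ℕ) < n - k then (1 : Matrix (Fin n) (Fin n) ℝ) i j else 0)))

namespace Stmt6Aux

noncomputable section

/-- Diagonal entries of the first block of the normal form. -/
def dVec (n k r s : ℕ) : Fin n → ℝ := fun i =>
  if (i : ℕ) < r then -1 else if (i : ℕ) < r + s then 1 else if (i : ℕ) < n - k then 0 else 1

/-- Diagonal entries of the second block of the normal form. -/
def bVec (n k : ℕ) : Fin n → ℝ := fun i => if (i : ℕ) < n - k then 1 else 0

lemma vkrs_matrix_eq (n k r s : ℕ) (hrs : r + s ≤ n - k) :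
    (Matrix.fromRows
      (Matrix.of fun (i j : Fin n) => if (i : ℕ) < n - k then -(zetaMat n r s i j)
        else (1 : Matrix (Fin n) (Fin n) ℝ) i j)
      (Matrix.of fun (i j : Fin n) => if (i : ℕ) < n - k then (1 : Matrix (Fin n) (Fin n) ℝ) i j else 0))
    = Matrix.fromRows (diagonal (dVec n k r s)) (diagonal (bVec n k)) := by
  have hA : (Matrix.of fun (i j : Fin n) => if (i : ℕ) < n - k then -(zetaMat n r s i j)
        else (1 : Matrix (Fin n) (Fin n) ℝ) i j) = diagonal (dVec n k r s) := by
    ext i j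
    simp only [of_apply, zetaMat, dVec, diagonal_apply, one_apply]
    by_cases hij : i = j
    · subst hij
      simp only [if_pos rfl]
      split_ifs <;> first | rfl | omega | simp | (exfalso; omega)
    · simp [hij]
  have hB : (Matrix.of fun (i j : Fin n) => if (i : ℕ) < n - k
        then (1 : Matrix (Fin n) (Fin n) ℝ) i j else 0) = diagonal (bVec n k) := by
    ext i j
    simp only [of_apply, bVec, diagonal_apply, one_apply]
    by_cases hij : i = j
    · subst hij; simp
    · simp [hij]
  rw [hA, hB]

lemma dot_JJ (n : ℕ) (X Y : Matrix (Fin n) (Fin n) ℝ) (w w' : Fin n → ℝ) :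
    ((fromRows X Y) *ᵥ w) ⬝ᵥ (JJ n) *ᵥ ((fromRows X Y) *ᵥ w') =
      (Y *ᵥ w) ⬝ᵥ (X *ᵥ w') - (X *ᵥ w) ⬝ᵥ (Y *ᵥ w') := by
  rw [fromRows_mulVec, fromRows_mulVec, JJ, fromBlocks_mulVec]
  simp only [zero_mulVec, one_mulVec, neg_mulVec, add_zero, zero_add,
    sumElim_dotProduct_sumElim, dotProduct_neg, Sum.elim_comp_inl, Sum.elim_comp_inr]
  ring

lemma mulVec_pair_dot (n : ℕ) (A B : Matrix (Fin n) (Fin n) ℝ) (w w' : Fin n → ℝ) :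
    (A *ᵥ w) ⬝ᵥ (B *ᵥ w') = w ⬝ᵥ (Aᵀ * B) *ᵥ w' := by
  calc (A *ᵥ w) ⬝ᵥ (B *ᵥ w') = (w ᵥ* Aᵀ) ⬝ᵥ (B *ᵥ w') := by rw [vecMul_transpose]
    _ = ((w ᵥ* Aᵀ) ᵥ* B) ⬝ᵥ w' := by rw [dotProduct_mulVec]
    _ = (w ᵥ* (Aᵀ * B)) ⬝ᵥ w' := by rw [vecMul_vecMul]
    _ = w ⬝ᵥ (Aᵀ * B) *ᵥ w' := by rw [dotProduct_mulVec]

lemma monotone_lt_card {m : ℕ} {w : Fin m → ℕ} (hw : Monotone w) (t : ℕ) (i : Fin m) :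
    w i ≤ t ↔ (i : ℕ) < (Finset.univ.filter fun j => w j ≤ t).card := by
  constructor
  · intro h
    have hsub : Finset.Iic i ⊆ Finset.univ.filter fun j => w j ≤ t := by
      intro j hj
      simp only [Finset.mem_Iic] at hj
      simp only [Finset.mem_filter, Finset.mem_univ, true_and]
      exact le_trans (hw hj) h
    have := Finset.card_le_card hsub
    rw [Fin.card_Iic] at this
    omega
  · intro h
    by_contra hc
    have hsub : (Finset.univ.filter fun j => w j ≤ t) ⊆ Finset.Iio i := by
      intro j hj
      simp only [Finset.mem_filter, Finset.mem_univ, true_and] at hj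
      rw [Finset.mem_Iio]
      by_contra hji
      push_neg at hji
      exact hc (le_trans (hw hji) hj)
    have := Finset.card_le_card hsub
    rw [Fin.card_Iio] at this
    omega

lemma perm_congr {m : ℕ} (v : Fin m → ℝ) (σ : Equiv.Perm (Fin m)) :
    ∃ Pm : Matrix (Fin m) (Fin m) ℝ, IsUnit Pm ∧
      Pmᵀ * diagonal v * Pm = diagonal (fun i => v (σ i)) := by
  refine ⟨(1 : Matrix (Fin m) (Fin m) ℝ).submatrix id ⇑σ, ?_, ?_⟩
  · apply IsUnit.of_mul_eq_one ( (1 : Matrix (Fin m) (Fin m) ℝ).submatrix ⇑σ id)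
    rw [submatrix_mul_equiv]
    simp
  · have hPt : ((1 : Matrix (Fin m) (Fin m) ℝ).submatrix id ⇑σ)ᵀ
        = (1 : Matrix (Fin m) (Fin m) ℝ).submatrix ⇑σ id := by
      rw [transpose_submatrix, transpose_one]
    rw [hPt, mul_assoc]
    ext i j
    simp only [mul_apply, submatrix_apply, one_apply, diagonal_apply, id_eq]
    rw [Finset.sum_eq_single (σ i)]
    · simp only [if_pos rfl, one_mul]
      rw [Finset.sum_eq_single (σ j)]
      · simp [EmbeddingLike.apply_eq_iff_eq, eq_comm]
      · intro b _ hb; simp [hb, Ne.symm hb]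
      · simp
    · intro b _ hb
      simp [Ne.symm hb]
    · simp

lemma isLagrangian_range (n : ℕ) (X Y : Matrix (Fin n) (Fin n) ℝ)
    (hsym : Xᵀ * Y = Yᵀ * X)
    (hinj : ∀ v : Fin n → ℝ, X *ᵥ v = 0 → Y *ᵥ v = 0 → v = 0) :
    IsLagrangian n (LinearMap.range (Matrix.mulVecLin (fromRows X Y))) := by
  have hinj' : Function.Injective ((fromRows X Y).mulVecLin) := by
    rw [← LinearMap.ker_eq_bot, Submodule.eq_bot_iff]
    intro v hv
    rw [LinearMap.mem_ker, mulVecLin_apply, fromRows_mulVec] at hv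
    refine hinj v ?_ ?_
    · funext i; exact congrFun hv (Sum.inl i)
    · funext i; exact congrFun hv (Sum.inr i)
  constructor
  · rw [LinearMap.finrank_range_of_inj hinj']
    simp [Module.finrank_pi]
  · rintro u ⟨w, rfl⟩ v ⟨w', rfl⟩
    rw [mulVecLin_apply, mulVecLin_apply, dot_JJ, mulVec_pair_dot, mulVec_pair_dot, hsym,
      sub_self]

lemma exists_sorting_perm {m : ℕ} (v : Fin m → ℝ)
    (hv : ∀ i, v i = -1 ∨ v i = 0 ∨ v i = 1) :
    ∃ r s : ℕ, r + s ≤ m ∧ ∃ σ : Equiv.Perm (Fin m), ∀ i : Fin m,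
      v (σ i) = if (i : ℕ) < r then -1 else if (i : ℕ) < r + s then 1 else 0 := by
  classical
  set κ : Fin m → ℕ := fun i => if v i = -1 then 0 else if v i = 1 then 1 else 2 with hκ
  set σ := Tuple.sort κ with hσdef
  have hmono : Monotone (κ ∘ σ) := Tuple.monotone_sort κ
  set r := (Finset.univ.filter fun j => (κ ∘ σ) j ≤ 0).card with hr
  set rs := (Finset.univ.filter fun j => (κ ∘ σ) j ≤ 1).card with hrs
  have hrle : r ≤ rs := by
    apply Finset.card_le_card
    intro j hj
    simp only [Finset.mem_filter, Finset.mem_univ, true_and] at hj ⊢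
    omega
  have hrsle : rs ≤ m := by
    have := Finset.card_filter_le (Finset.univ : Finset (Fin m)) (fun j => (κ ∘ σ) j ≤ 1)
    exact this.trans (by simp)
  refine ⟨r, rs - r, by omega, σ, ?_⟩
  intro i
  have h0 := (monotone_lt_card hmono 0 i).symm
  have h1 := (monotone_lt_card hmono 1 i).symm
  have hadd : r + (rs - r) = rs := by omega
  rw [hadd]
  by_cases hi0 : (i : ℕ) < r
  · rw [if_pos hi0]
    have h2 : κ (σ i) = 0 := Nat.le_zero.mp (h0.mp hi0)
    by_contra hne
    have h3 : κ (σ i) ≠ 0 := by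
      simp only [hκ]
      rw [if_neg hne]
      split_ifs <;> omega
    exact h3 h2
  · by_cases hi1 : (i : ℕ) < rs
    · have hle1 : κ (σ i) ≤ 1 := h1.mp hi1
      have hgt0 : ¬ κ (σ i) ≤ 0 := fun hc => hi0 (h0.mpr hc)
      have h2 : κ (σ i) = 1 := by omega
      rw [if_neg hi0, if_pos hi1]
      simp only [hκ] at h2
      split_ifs at h2 with h' h''
      · exact h''
      · omega
    · have hgt1 : ¬ κ (σ i) ≤ 1 := fun hc => hi1 (h1.mpr hc)
      rw [if_neg hi0, if_neg hi1]
      rcases hv (σ i) with h | h | h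
      · exfalso; apply hgt1; norm_num [hκ, h]
      · exact h
      · exfalso; apply hgt1; norm_num [hκ, h]

lemma exists_congr_diag {m : ℕ} (S : Matrix (Fin m) (Fin m) ℝ) (hS : Sᵀ = S) :
    ∃ r s : ℕ, r + s ≤ m ∧ ∃ g : Matrix (Fin m) (Fin m) ℝ, IsUnit g ∧
      gᵀ * S * g = diagonal (fun i : Fin m =>
        if (i : ℕ) < r then (-1 : ℝ) else if (i : ℕ) < r + s then 1 else 0) := by
  classical
  have hA : S.IsHermitian := by
    rw [Matrix.IsHermitian]
    ext i j
    simpa [conjTranspose_apply] using congrFun (congrFun hS i) j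
  set U : Matrix (Fin m) (Fin m) ℝ := (hA.eigenvectorUnitary : Matrix (Fin m) (Fin m) ℝ) with hUdef
  have hUmem := (hA.eigenvectorUnitary).2
  have hU : star U * U = 1 := Matrix.mem_unitaryGroup_iff'.mp hUmem
  have hstarU : star U = Uᵀ := by
    ext i j
    simp [Matrix.star_apply]
  have hUtU : Uᵀ * U = 1 := by rw [← hstarU]; exact hU
  set μ := hA.eigenvalues with hμdef
  have hspec : S = U * diagonal μ * Uᵀ := by
    have h := hA.spectral_theorem
    rw [RCLike.ofReal_real_eq_id] at h
    simp at h
    rw [← hstarU]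
    exact h
  set c : Fin m → ℝ := fun i => if μ i = 0 then 1 else (Real.sqrt |μ i|)⁻¹ with hcdef
  set v : Fin m → ℝ := fun i => if μ i = 0 then 0 else if 0 < μ i then 1 else -1 with hvdef
  have hvsign : ∀ i, c i * μ i * c i = v i := by
    intro i
    simp only [hcdef, hvdef]
    by_cases h0 : μ i = 0
    · simp [h0]
    · rw [if_neg h0, if_neg h0]
      have habs : 0 < |μ i| := abs_pos.mpr h0
      have hsq : (Real.sqrt |μ i|)⁻¹ * μ i * (Real.sqrt |μ i|)⁻¹ = μ i / |μ i| := by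
        rw [div_eq_mul_inv]
        rw [mul_comm _ (μ i), mul_assoc, ← mul_inv]
        rw [Real.mul_self_sqrt (abs_nonneg _)]
      rw [hsq]
      rcases lt_or_gt_of_ne h0 with h | h
      · rw [if_neg (by linarith), abs_of_neg h]
        field_simp
      · rw [if_pos h, abs_of_pos h]
        field_simp
  have hcne : ∀ i, c i ≠ 0 := by
    intro i
    simp only [hcdef]
    split_ifs with h0
    · norm_num
    · apply inv_ne_zero
      refine (Real.sqrt_ne_zero (abs_nonneg _)).mpr ?_
      exact abs_ne_zero.mpr h0
  set g₀ := U * diagonal c with hg₀def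
  have hg₀ : g₀ᵀ * S * g₀ = diagonal v := by
    rw [hspec, hg₀def, transpose_mul, diagonal_transpose]
    have h1 : diagonal c * Uᵀ * (U * diagonal μ * Uᵀ) * (U * diagonal c)
        = diagonal c * (Uᵀ * U) * diagonal μ * (Uᵀ * U) * diagonal c := by
      simp only [Matrix.mul_assoc]
    rw [h1, hUtU, Matrix.mul_one, Matrix.mul_one, diagonal_mul_diagonal, diagonal_mul_diagonal]
    rw [show (fun i => c i * μ i * c i) = v from funext hvsign]
  have hUunit : IsUnit U := IsUnit.of_mul_eq_one_right Uᵀ hUtU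
  have hdiagunit : IsUnit (diagonal c) := by
    apply IsUnit.of_mul_eq_one ( diagonal fun i => (c i)⁻¹)
    rw [diagonal_mul_diagonal]
    have : (fun i => c i * (c i)⁻¹) = fun _ => (1:ℝ) := by
      funext i; exact mul_inv_cancel₀ (hcne i)
    rw [this, diagonal_one]
  have hg₀unit : IsUnit g₀ := hUunit.mul hdiagunit
  have hvvals : ∀ i, v i = -1 ∨ v i = 0 ∨ v i = 1 := by
    intro i
    simp only [hvdef]
    split_ifs <;> simp
  obtain ⟨r, s, hrs, σ, hσ⟩ := exists_sorting_perm v hvvals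
  obtain ⟨Pm, hPmU, hPmc⟩ := perm_congr v σ
  refine ⟨r, s, hrs, g₀ * Pm, hg₀unit.mul hPmU, ?_⟩
  rw [transpose_mul]
  have : Pmᵀ * g₀ᵀ * S * (g₀ * Pm) = Pmᵀ * (g₀ᵀ * S * g₀) * Pm := by
    simp only [Matrix.mul_assoc]
  rw [this, hg₀, hPmc]
  rw [show (fun i => v (σ i)) = (fun i : Fin m =>
    if (i : ℕ) < r then (-1:ℝ) else if (i : ℕ) < r + s then 1 else 0) from funext hσ]

lemma exists_rank_normal (n : ℕ) (Y : Matrix (Fin n) (Fin n) ℝ) :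
    ∃ m : ℕ, m ≤ n ∧ ∃ P Q : Matrix (Fin n) (Fin n) ℝ, IsUnit P ∧ IsUnit Q ∧
      P * Y * Q = diagonal (fun i : Fin n => if (i : ℕ) < m then (1 : ℝ) else 0) := by
  classical
  set f := Y.mulVecLin with hfdef
  have hfin : Module.finrank ℝ (Fin n → ℝ) = n := by
    simp [Module.finrank_pi]
  set m := Module.finrank ℝ (LinearMap.range f) with hm
  have hmn : m ≤ n := hfin ▸ Submodule.finrank_le _
  have hrn := LinearMap.finrank_range_add_finrank_ker f
  rw [hfin] at hrn
  have hker : Module.finrank ℝ (LinearMap.ker f) = n - m := by omega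
  obtain ⟨C, hC⟩ := Submodule.exists_isCompl (LinearMap.ker f)
  have hCadd := Submodule.finrank_add_eq_of_isCompl hC
  rw [hfin] at hCadd
  have hCrank : Module.finrank ℝ C = m := by omega
  obtain ⟨D, hD⟩ := Submodule.exists_isCompl (LinearMap.range f)
  have hDadd := Submodule.finrank_add_eq_of_isCompl hD
  rw [hfin] at hDadd
  have hDrank : Module.finrank ℝ D = n - m := by omega
  set bC : Module.Basis (Fin m) ℝ C := Module.finBasisOfFinrankEq ℝ C hCrank with hbC
  set bK : Module.Basis (Fin (n - m)) ℝ (LinearMap.ker f) := Module.finBasisOfFinrankEq ℝ _ hker with hbK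
  set bD : Module.Basis (Fin (n - m)) ℝ D := Module.finBasisOfFinrankEq ℝ D hDrank with hbD
  set g : C →ₗ[ℝ] LinearMap.range f :=
    f.restrict (fun x _ => LinearMap.mem_range_self f x) with hgdef
  have hgcoe : ∀ x : C, (g x : Fin n → ℝ) = f x := fun x => rfl
  have hginj : Function.Injective g := by
    intro x y hxy
    have h1 : f ((x : Fin n → ℝ) - y) = 0 := by
      rw [map_sub, sub_eq_zero]
      have := congrArg (Subtype.val) hxy
      rwa [hgcoe, hgcoe] at this
    have h2 : ((x : Fin n → ℝ) - y) ∈ LinearMap.ker f := h1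
    have h3 : ((x : Fin n → ℝ) - y) ∈ C := sub_mem x.2 y.2
    have h4 : ((x : Fin n → ℝ) - y) = 0 := by
      have := hC.disjoint
      rw [Submodule.disjoint_def] at this
      exact this _ h2 h3
    exact Subtype.ext (by rw [← sub_eq_zero]; exact h4)
  have hgsurj : Function.Surjective g := by
    rw [← LinearMap.range_eq_top]
    apply Submodule.eq_top_of_finrank_eq
    rw [LinearMap.finrank_range_of_inj hginj, hCrank]
  set geq := LinearEquiv.ofBijective g ⟨hginj, hgsurj⟩ with hgeq
  set bR : Module.Basis (Fin m) ℝ (LinearMap.range f) := bC.map geq with hbR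
  have hmadd : m + (n - m) = n := by omega
  set E : Fin m ⊕ Fin (n - m) ≃ Fin n := finSumFinEquiv.trans (finCongr hmadd) with hE
  set src : Module.Basis (Fin n) ℝ (Fin n → ℝ) :=
    ((bC.prod bK).map (Submodule.prodEquivOfIsCompl _ _ hC.symm)).reindex E with hsrcdef
  set tgt : Module.Basis (Fin n) ℝ (Fin n → ℝ) :=
    ((bR.prod bD).map (Submodule.prodEquivOfIsCompl _ _ hD)).reindex E with htgtdef
  have hsrc : ∀ j, src (E j) =
      (Submodule.prodEquivOfIsCompl _ _ hC.symm) ((bC.prod bK) j) := by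
    intro j
    rw [hsrcdef, Module.Basis.reindex_apply, Equiv.symm_apply_apply, Module.Basis.map_apply]
  have htgt : ∀ j, tgt (E j) =
      (Submodule.prodEquivOfIsCompl _ _ hD) ((bR.prod bD) j) := by
    intro j
    rw [htgtdef, Module.Basis.reindex_apply, Equiv.symm_apply_apply, Module.Basis.map_apply]
  have hkey1 : ∀ j₁ : Fin m, f (src (E (Sum.inl j₁))) = tgt (E (Sum.inl j₁)) := by
    intro j₁
    rw [hsrc, htgt]
    have h1 : (bC.prod bK) (Sum.inl j₁) = (bC j₁, 0) :=
      Prod.ext (Module.Basis.prod_apply_inl_fst _ _ _) (Module.Basis.prod_apply_inl_snd _ _ _)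
    have h2 : (bR.prod bD) (Sum.inl j₁) = (bR j₁, 0) :=
      Prod.ext (Module.Basis.prod_apply_inl_fst _ _ _) (Module.Basis.prod_apply_inl_snd _ _ _)
    rw [h1, h2, Submodule.coe_prodEquivOfIsCompl', Submodule.coe_prodEquivOfIsCompl']
    simp only [ZeroMemClass.coe_zero, add_zero]
    rw [hbR, Module.Basis.map_apply]
    have : (geq (bC j₁) : Fin n → ℝ) = g (bC j₁) := rfl
    rw [this, hgcoe]
  have hkey2 : ∀ j₂ : Fin (n - m), f (src (E (Sum.inr j₂))) = 0 := by
    intro j₂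
    rw [hsrc]
    have h1 : (bC.prod bK) (Sum.inr j₂) = (0, bK j₂) :=
      Prod.ext (Module.Basis.prod_apply_inr_fst _ _ _) (Module.Basis.prod_apply_inr_snd _ _ _)
    rw [h1, Submodule.coe_prodEquivOfIsCompl']
    simp only [ZeroMemClass.coe_zero, zero_add]
    exact (bK j₂).2
  -- matrices
  set P := LinearMap.toMatrix' (tgt.equivFun : (Fin n → ℝ) →ₗ[ℝ] (Fin n → ℝ)) with hP
  set Q := LinearMap.toMatrix' (src.equivFun.symm : (Fin n → ℝ) →ₗ[ℝ] (Fin n → ℝ)) with hQ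
  have hPunit : IsUnit P := by
    apply IsUnit.of_mul_eq_one
      ( LinearMap.toMatrix' (tgt.equivFun.symm : (Fin n → ℝ) →ₗ[ℝ] (Fin n → ℝ)))
    rw [hP, ← LinearMap.toMatrix'_comp]
    have : (tgt.equivFun : (Fin n → ℝ) →ₗ[ℝ] (Fin n → ℝ)).comp
        (tgt.equivFun.symm : (Fin n → ℝ) →ₗ[ℝ] (Fin n → ℝ)) = LinearMap.id := by
      ext x
      simp
    rw [this, LinearMap.toMatrix'_id]
  have hQunit : IsUnit Q := by
    apply IsUnit.of_mul_eq_one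
      ( LinearMap.toMatrix' (src.equivFun : (Fin n → ℝ) →ₗ[ℝ] (Fin n → ℝ)))
    rw [hQ, ← LinearMap.toMatrix'_comp]
    have : (src.equivFun.symm : (Fin n → ℝ) →ₗ[ℝ] (Fin n → ℝ)).comp
        (src.equivFun : (Fin n → ℝ) →ₗ[ℝ] (Fin n → ℝ)) = LinearMap.id := by
      ext x
      simp
    rw [this, LinearMap.toMatrix'_id]
  refine ⟨m, hmn, P, Q, hPunit, hQunit, ?_⟩
  have hY : Y = LinearMap.toMatrix' f := by
    rw [hfdef, ← Matrix.toLin'_apply', LinearMap.toMatrix'_toLin']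
  rw [hY, hP, hQ, ← LinearMap.toMatrix'_comp, ← LinearMap.toMatrix'_comp]
  have hcomp : ((tgt.equivFun : (Fin n → ℝ) →ₗ[ℝ] (Fin n → ℝ)).comp f).comp
      (src.equivFun.symm : (Fin n → ℝ) →ₗ[ℝ] (Fin n → ℝ))
      = Matrix.mulVecLin (diagonal (fun i : Fin n => if (i : ℕ) < m then (1 : ℝ) else 0)) := by
    apply (Pi.basisFun ℝ (Fin n)).ext
    intro i
    have hbf : (Pi.basisFun ℝ (Fin n)) i = Pi.single i 1 := by
      simp [Pi.basisFun_apply]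
    have hsingle : ∀ (b : Module.Basis (Fin n) ℝ (Fin n → ℝ)) (i : Fin n),
        b.equivFun.symm (Pi.single i 1) = b i := by
      intro b i
      rw [Module.Basis.equivFun_symm_apply]
      rw [Finset.sum_eq_single i]
      · simp
      · intro b' _ hb'; simp [Pi.single_apply, Ne.symm hb']
      · simp
    have hself : ∀ (b : Module.Basis (Fin n) ℝ (Fin n → ℝ)) (i : Fin n),
        b.equivFun (b i) = Pi.single i 1 := by
      intro b i
      funext j
      rw [Module.Basis.equivFun_self]
      simp [Pi.single_apply, eq_comm]
    obtain ⟨j, hj⟩ : ∃ j, E j = i := ⟨E.symm i, Equiv.apply_symm_apply _ _⟩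
    rw [hbf]
    simp only [LinearMap.comp_apply, LinearEquiv.coe_coe]
    rw [hsingle src i, Matrix.mulVecLin_apply, ← hj]
    cases j with
    | inl j₁ =>
        have hk := hkey1 j₁
        rw [hfdef, Matrix.mulVecLin_apply] at hk
        rw [hk, hself tgt]
        have hval : ((E (Sum.inl j₁)) : ℕ) = (j₁ : ℕ) := by
          simp [hE, finSumFinEquiv_apply_left]
        rw [Matrix.mulVecLin_apply, diagonal_mulVec_single]
        rw [if_pos (by rw [hval]; exact j₁.isLt), one_mul]
    | inr j₂ =>
        have hk := hkey2 j₂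
        rw [hfdef, Matrix.mulVecLin_apply] at hk
        rw [hk, map_zero]
        have hval : ((E (Sum.inr j₂)) : ℕ) = m + (j₂ : ℕ) := by
          simp [hE, finSumFinEquiv_apply_right]
        rw [Matrix.mulVecLin_apply, diagonal_mulVec_single, if_neg (by omega), zero_mul]
        simp
  rw [hcomp, ← Matrix.toLin'_apply', LinearMap.toMatrix'_toLin']

set_option maxHeartbeats 1000000 in
lemma pair_normal_form (n : ℕ) (X Y : Matrix (Fin n) (Fin n) ℝ)
    (hsym : Xᵀ * Y = Yᵀ * X)
    (hinj : ∀ v : Fin n → ℝ, X *ᵥ v = 0 → Y *ᵥ v = 0 → v = 0) :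
    ∃ k r s : ℕ, k ≤ n ∧ r + s ≤ n - k ∧
      ∃ a g : Matrix (Fin n) (Fin n) ℝ, IsUnit a ∧ IsUnit g ∧
        a * X * g = diagonal (dVec n k r s) ∧ (aᵀ)⁻¹ * Y * g = diagonal (bVec n k) := by
  classical
  obtain ⟨m, hmn, P, Q, hP, hQ, hPYQ⟩ := exists_rank_normal n Y
  set k := n - m with hk
  have hnk : n - k = m := by omega
  have hPdet : IsUnit P.det := (Matrix.isUnit_iff_isUnit_det P).mp hP
  have hQdet : IsUnit Q.det := (Matrix.isUnit_iff_isUnit_det Q).mp hQ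
  have hPtdet : IsUnit Pᵀ.det := by rwa [Matrix.det_transpose]
  set a₁ := (Pᵀ)⁻¹ with ha₁def
  have ha₁ : IsUnit a₁ :=
    (Matrix.isUnit_nonsing_inv_iff).mpr ((Matrix.isUnit_iff_isUnit_det _).mpr hPtdet)
  have ha₁t : a₁ᵀ = P⁻¹ := by
    rw [ha₁def, ← Matrix.transpose_nonsing_inv, transpose_transpose]
  set b : Fin n → ℝ := fun i : Fin n => if (i : ℕ) < m then (1 : ℝ) else 0 with hbdef
  set X₁ := a₁ * X * Q with hX₁def
  -- symmetry of the transformed pair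
  have hsym₁ : X₁ᵀ * diagonal b = diagonal b * X₁ := by
    have h1 : X₁ᵀ * diagonal b = Qᵀ * (Xᵀ * Y) * Q := by
      rw [← hPYQ, hX₁def]
      simp only [transpose_mul]
      have e1 : Qᵀ * (Xᵀ * a₁ᵀ) * (P * Y * Q) = Qᵀ * (Xᵀ * ((P⁻¹ * P) * (Y * Q))) := by
        rw [ha₁t]; simp only [Matrix.mul_assoc]
      rw [e1, Matrix.nonsing_inv_mul _ hPdet, Matrix.one_mul]
      simp only [Matrix.mul_assoc]
    have h2 : diagonal b * X₁ = Qᵀ * (Yᵀ * X) * Q := by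
      have e0 : diagonal b = (P * Y * Q)ᵀ := by rw [hPYQ, diagonal_transpose]
      rw [e0, hX₁def]
      simp only [transpose_mul]
      have e1 : Qᵀ * (Yᵀ * Pᵀ) * (a₁ * X * Q) = Qᵀ * (Yᵀ * ((Pᵀ * (Pᵀ)⁻¹) * (X * Q))) := by
        rw [ha₁def]; simp only [Matrix.mul_assoc]
      rw [e1, Matrix.mul_nonsing_inv _ hPtdet, Matrix.one_mul]
      simp only [Matrix.mul_assoc]
    rw [h1, h2, hsym]
  have hentry : ∀ i j : Fin n, X₁ j i * b j = b i * X₁ i j := by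
    intro i j
    have := congrFun (congrFun hsym₁ i) j
    simpa [mul_diagonal, diagonal_mul, transpose_apply] using this
  -- block world
  have hmadd : m + k = n := by omega
  set E : Fin m ⊕ Fin k ≃ Fin n := finSumFinEquiv.trans (finCongr hmadd) with hE
  have hE1 : ∀ i : Fin m, ((E (Sum.inl i)) : ℕ) = (i : ℕ) := by
    intro i; simp [hE, finSumFinEquiv_apply_left]
  have hE2 : ∀ j : Fin k, ((E (Sum.inr j)) : ℕ) = m + (j : ℕ) := by
    intro j; simp [hE, finSumFinEquiv_apply_right]
  set X11 : Matrix (Fin m) (Fin m) ℝ :=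
    Matrix.of fun i j => X₁ (E (Sum.inl i)) (E (Sum.inl j)) with hX11def
  set X21 : Matrix (Fin k) (Fin m) ℝ :=
    Matrix.of fun i j => X₁ (E (Sum.inr i)) (E (Sum.inl j)) with hX21def
  set X22 : Matrix (Fin k) (Fin k) ℝ :=
    Matrix.of fun i j => X₁ (E (Sum.inr i)) (E (Sum.inr j)) with hX22def
  have hX2 : X₁.submatrix ⇑E ⇑E = fromBlocks X11 0 X21 X22 := by
    ext i j
    cases i with
    | inl i =>
      cases j with
      | inl j => rfl
      | inr j =>
        show X₁ (E (Sum.inl i)) (E (Sum.inr j)) = 0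
        have h := hentry (E (Sum.inr j)) (E (Sum.inl i))
        rw [hbdef] at h
        simp only [hE1, hE2] at h
        rw [if_pos (i.isLt), if_neg (by omega)] at h
        simpa using h
    | inr i =>
      cases j with
      | inl j => rfl
      | inr j => rfl
  have hX1back : X₁ = (fromBlocks X11 0 X21 X22).submatrix ⇑E.symm ⇑E.symm := by
    rw [← hX2, submatrix_submatrix]
    simp [Equiv.self_comp_symm]
  have hX11sym : X11ᵀ = X11 := by
    ext i j
    show X₁ (E (Sum.inl j)) (E (Sum.inl i)) = X₁ (E (Sum.inl i)) (E (Sum.inl j))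
    have h := hentry (E (Sum.inl i)) (E (Sum.inl j))
    rw [hbdef] at h
    simp only [hE1] at h
    rw [if_pos (j.isLt), if_pos (i.isLt), mul_one, one_mul] at h
    exact h
  -- invertibility of X22
  have hinj₁ : ∀ v : Fin n → ℝ, X₁ *ᵥ v = 0 → (diagonal b) *ᵥ v = 0 → v = 0 := by
    intro v h1 h2
    rw [← hPYQ] at h2
    rw [hX₁def] at h1
    rw [← Matrix.mulVec_mulVec, ← Matrix.mulVec_mulVec] at h1 h2
    have ha₁inj : Function.Injective a₁.mulVec := Matrix.mulVec_injective_iff_isUnit.mpr ha₁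
    have hPinj : Function.Injective P.mulVec := Matrix.mulVec_injective_iff_isUnit.mpr hP
    have hQinj : Function.Injective Q.mulVec := Matrix.mulVec_injective_iff_isUnit.mpr hQ
    have h1' : X *ᵥ (Q *ᵥ v) = 0 := ha₁inj (by rw [h1, Matrix.mulVec_zero])
    have h2' : Y *ᵥ (Q *ᵥ v) = 0 := hPinj (by rw [h2, Matrix.mulVec_zero])
    have := hinj _ h1' h2'
    exact hQinj (by rw [this, Matrix.mulVec_zero])
  have hX22 : IsUnit X22 := by
    rw [← Matrix.mulVec_injective_iff_isUnit]
    have hzero : ∀ u : Fin k → ℝ, X22 *ᵥ u = 0 → u = 0 := by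
      intro u hu
      set v : Fin n → ℝ := fun i => Sum.elim (0 : Fin m → ℝ) u (E.symm i) with hvdef
      have hvE : v ∘ ⇑E = Sum.elim (0 : Fin m → ℝ) u := by
        funext j; simp [hvdef]
      have hv1 : X₁ *ᵥ v = 0 := by
        rw [hX1back, submatrix_mulVec_equiv]
        have : v ∘ ⇑E.symm.symm = Sum.elim (0 : Fin m → ℝ) u := by
          rw [Equiv.symm_symm]; exact hvE
        rw [this, fromBlocks_mulVec]
        simp only [Sum.elim_comp_inl, Sum.elim_comp_inr, Matrix.mulVec_zero, Matrix.zero_mulVec,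
          add_zero, zero_add, hu]
        funext i
        cases h : E.symm i <;> simp [h]
      have hv2 : (diagonal b) *ᵥ v = 0 := by
        funext i
        rw [Matrix.mulVec_diagonal]
        cases h : E.symm i with
        | inl j => simp [hvdef, h]
        | inr j =>
          have hi : i = E (Sum.inr j) := by rw [← h, Equiv.apply_symm_apply]
          have hb0 : b i = 0 := by
            simp only [hbdef]
            rw [if_neg (by rw [hi, hE2]; omega)]
          rw [hb0, zero_mul]
          rfl
      have hv0 := hinj₁ v hv1 hv2
      funext j
      have := congrFun hv0 (E (Sum.inr j))
      simpa [hvdef, Equiv.symm_apply_apply] using this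
    intro x y hxy
    have : X22 *ᵥ (x - y) = 0 := by
      rw [Matrix.mulVec_sub, hxy, sub_self]
    have := hzero _ this
    rwa [sub_eq_zero] at this
  have hX22det : IsUnit X22.det := (Matrix.isUnit_iff_isUnit_det _).mp hX22
  -- Sylvester
  obtain ⟨r, s, hrs, g1, hg1, hg1c⟩ := exists_congr_diag X11 hX11sym
  have hg1det : IsUnit g1.det := (Matrix.isUnit_iff_isUnit_det _).mp hg1
  set dm : Fin m → ℝ := fun i => if (i : ℕ) < r then (-1 : ℝ) else if (i : ℕ) < r + s then 1 else 0
    with hdmdef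
  set A₂ := (fromBlocks g1ᵀ 0 0 (1 : Matrix (Fin k) (Fin k) ℝ)).submatrix ⇑E.symm ⇑E.symm with hA₂
  set G₂ := (fromBlocks g1 0 (-(X22⁻¹ * X21 * g1)) X22⁻¹).submatrix ⇑E.symm ⇑E.symm with hG₂
  set C₂ := (fromBlocks g1⁻¹ 0 0 (1 : Matrix (Fin k) (Fin k) ℝ)).submatrix ⇑E.symm ⇑E.symm with hC₂
  have hA₂unit : IsUnit A₂ := by
    rw [Matrix.isUnit_iff_isUnit_det, hA₂, det_submatrix_equiv_self, det_fromBlocks_zero₁₂,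
      det_transpose, det_one, mul_one]
    exact hg1det
  have hG₂unit : IsUnit G₂ := by
    rw [Matrix.isUnit_iff_isUnit_det, hG₂, det_submatrix_equiv_self, det_fromBlocks_zero₁₂]
    exact (hg1det.mul ((Matrix.isUnit_iff_isUnit_det _).mp
      ((Matrix.isUnit_nonsing_inv_iff).mpr hX22)))
  refine ⟨k, r, s, by omega, by omega, A₂ * a₁, Q * G₂, hA₂unit.mul ha₁, hQ.mul hG₂unit, ?_, ?_⟩
  · -- a X g
    have hstep : A₂ * a₁ * X * (Q * G₂) = A₂ * X₁ * G₂ := by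
      rw [hX₁def]; simp only [Matrix.mul_assoc]
    rw [hstep, hX1back, hA₂, hG₂, submatrix_mul_equiv, submatrix_mul_equiv]
    have hblocks : fromBlocks g1ᵀ 0 0 (1 : Matrix (Fin k) (Fin k) ℝ) *
        fromBlocks X11 0 X21 X22 * fromBlocks g1 0 (-(X22⁻¹ * X21 * g1)) X22⁻¹
        = fromBlocks (diagonal dm) 0 0 1 := by
      rw [fromBlocks_multiply, fromBlocks_multiply]
      simp only [Matrix.zero_mul, Matrix.mul_zero, add_zero, zero_add, Matrix.one_mul]
      rw [hg1c, Matrix.mul_neg]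
      rw [show X22 * (X22⁻¹ * X21 * g1) = (X22 * X22⁻¹) * (X21 * g1) by
        simp only [Matrix.mul_assoc]]
      rw [Matrix.mul_nonsing_inv _ hX22det, Matrix.one_mul, add_neg_cancel]
    rw [hblocks, show (1 : Matrix (Fin k) (Fin k) ℝ) = diagonal (fun _ => (1:ℝ)) from
      (diagonal_one).symm, fromBlocks_diagonal, submatrix_diagonal_equiv]
    have hfun : Sum.elim dm (fun _ => (1:ℝ)) ∘ ⇑E.symm = dVec n k r s := by
      funext i
      change Sum.elim dm (fun _ => (1:ℝ)) (E.symm i) = _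
      rcases h : E.symm i with j | j
      · have hi : i = E (Sum.inl j) := by rw [← h, Equiv.apply_symm_apply]
        have hival : (i : ℕ) = (j : ℕ) := by rw [hi, hE1]
        have hjm : (j : ℕ) < m := j.isLt
        rw [Sum.elim_inl]
        simp only [hdmdef, dVec, hival, hnk]
        split_ifs <;> first | rfl | omega
      · have hi : i = E (Sum.inr j) := by rw [← h, Equiv.apply_symm_apply]
        have hival : (i : ℕ) = m + (j : ℕ) := by rw [hi, hE2]
        rw [Sum.elim_inr]
        simp only [dVec, hival, hnk]
        rw [if_neg (by omega), if_neg (by omega), if_neg (by omega)]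
    rw [hfun]
  · -- (aᵀ)⁻¹ Y g
    have hainv : ((A₂ * a₁)ᵀ)⁻¹ = C₂ * P := by
      apply Matrix.inv_eq_left_inv
      rw [transpose_mul, ha₁t]
      rw [show C₂ * P * (P⁻¹ * A₂ᵀ) = C₂ * (P * P⁻¹) * A₂ᵀ by simp only [Matrix.mul_assoc]]
      rw [Matrix.mul_nonsing_inv _ hPdet, Matrix.mul_one]
      rw [hA₂, hC₂, transpose_submatrix, fromBlocks_transpose]
      rw [submatrix_mul_equiv, fromBlocks_multiply]
      simp only [Matrix.zero_mul, Matrix.mul_zero, add_zero, zero_add, Matrix.one_mul,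
        Matrix.mul_one, transpose_transpose, transpose_zero, transpose_one]
      rw [Matrix.nonsing_inv_mul _ hg1det]
      rw [show fromBlocks (1 : Matrix (Fin m) (Fin m) ℝ) 0 0 (1 : Matrix (Fin k) (Fin k) ℝ)
        = (1 : Matrix (Fin m ⊕ Fin k) (Fin m ⊕ Fin k) ℝ) from fromBlocks_one]
      exact submatrix_one_equiv E.symm
    rw [hainv]
    have hstep : C₂ * P * Y * (Q * G₂) = C₂ * (P * Y * Q) * G₂ := by
      simp only [Matrix.mul_assoc]
    rw [hstep, hPYQ]
    have hbfun : b = Sum.elim (fun _ => (1:ℝ)) (fun _ => (0:ℝ)) ∘ ⇑E.symm := by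
      funext i
      change b i = Sum.elim _ _ (E.symm i)
      rcases h : E.symm i with j | j
      · have hi : i = E (Sum.inl j) := by rw [← h, Equiv.apply_symm_apply]
        rw [Sum.elim_inl]
        simp only [hbdef]
        rw [if_pos (by rw [hi, hE1]; exact j.isLt)]
      · have hi : i = E (Sum.inr j) := by rw [← h, Equiv.apply_symm_apply]
        rw [Sum.elim_inr]
        simp only [hbdef]
        rw [if_neg (by rw [hi, hE2]; omega)]
    have hbdiag : diagonal b = (diagonal (Sum.elim (fun _ => (1:ℝ)) (fun _ => (0:ℝ)))).submatrix
        ⇑E.symm ⇑E.symm := by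
      rw [submatrix_diagonal_equiv, ← hbfun]
    rw [hbdiag, hC₂, hG₂, submatrix_mul_equiv, submatrix_mul_equiv]
    have hSE : diagonal (Sum.elim (fun _ => (1:ℝ)) (fun _ => (0:ℝ)))
        = fromBlocks (1 : Matrix (Fin m) (Fin m) ℝ) 0 0 (0 : Matrix (Fin k) (Fin k) ℝ) := by
      rw [← fromBlocks_diagonal, diagonal_one, diagonal_zero]
    rw [hSE, fromBlocks_multiply, fromBlocks_multiply]
    simp only [Matrix.zero_mul, Matrix.mul_zero, add_zero, zero_add, Matrix.one_mul,
      Matrix.mul_one, Matrix.nonsing_inv_mul _ hg1det]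
    rw [← hSE, submatrix_diagonal_equiv, ← hbfun]
    have hbb : b = bVec n k := by
      funext i
      simp only [hbdef, bVec, hnk]
    rw [hbb]

end

end Stmt6Aux

open Stmt6Aux in
theorem stmt6 (n : ℕ) :
    (∀ k r s : ℕ, k ≤ n → r + s ≤ n - k → IsLagrangian n (Vkrs n k r s)) ∧
    (∀ lam : Submodule ℝ (Fin n ⊕ Fin n → ℝ), IsLagrangian n lam →
      ∃ k r s : ℕ, k ≤ n ∧ r + s ≤ n - k ∧
        ∃ a : Matrix (Fin n) (Fin n) ℝ, IsUnit a ∧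
          Submodule.map (Matrix.mulVecLin (iota n a)) lam = Vkrs n k r s) := by
  constructor
  · intro k r s hk hrs
    rw [Vkrs, vkrs_matrix_eq n k r s hrs]
    apply isLagrangian_range
    · rw [diagonal_transpose, diagonal_transpose, diagonal_mul_diagonal, diagonal_mul_diagonal]
      rw [show (fun i => dVec n k r s i * bVec n k i)
        = (fun i => bVec n k i * dVec n k r s i) from funext fun i => mul_comm _ _]
    · intro v h1 h2
      funext i
      by_cases hi : (i : ℕ) < n - k
      · have := congrFun h2 i
        rw [Matrix.mulVec_diagonal] at this
        simp only [bVec, if_pos hi, one_mul] at this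
        simpa using this
      · have := congrFun h1 i
        rw [Matrix.mulVec_diagonal] at this
        simp only [dVec] at this
        rw [if_neg (by omega), if_neg (by omega), if_neg hi, one_mul] at this
        simpa using this
  · rintro lam ⟨hrank, homega⟩
    classical
    set bL : Module.Basis (Fin n) ℝ lam := Module.finBasisOfFinrankEq ℝ lam hrank with hbL
    set M : Matrix (Fin n ⊕ Fin n) (Fin n) ℝ :=
      Matrix.of fun i j => (bL j : Fin n ⊕ Fin n → ℝ) i with hMdef
    have hM : M.mulVecLin
        = (Submodule.subtype lam).comp (bL.equivFun.symm : (Fin n → ℝ) →ₗ[ℝ] lam) := by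
      apply LinearMap.ext
      intro v
      rw [Matrix.mulVecLin_apply]
      funext x
      rw [LinearMap.comp_apply]
      simp only [LinearEquiv.coe_coe, Submodule.coe_subtype]
      rw [Module.Basis.equivFun_symm_apply]
      have hc : ((∑ i, v i • bL i : lam) : Fin n ⊕ Fin n → ℝ) x = ∑ i, v i * ((bL i : Fin n ⊕ Fin n → ℝ) x) := by
        simp [Finset.sum_apply]
      rw [hc]
      simp only [Matrix.mulVec, dotProduct, hMdef, of_apply]
      exact Finset.sum_congr rfl fun j _ => mul_comm _ _
    have hrange : LinearMap.range M.mulVecLin = lam := by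
      rw [hM, LinearMap.range_comp, LinearEquiv.range, Submodule.map_top, Submodule.range_subtype]
    have hMinj : Function.Injective M.mulVecLin := by
      rw [hM]
      exact (Submodule.injective_subtype lam).comp bL.equivFun.symm.injective
    set X : Matrix (Fin n) (Fin n) ℝ := M.submatrix Sum.inl id with hXdef
    set Y : Matrix (Fin n) (Fin n) ℝ := M.submatrix Sum.inr id with hYdef
    have hMfr : M = fromRows X Y := by
      ext i j
      cases i <;> rfl
    have hsingledot : ∀ (A : Matrix (Fin n) (Fin n) ℝ) (i j : Fin n),
        (Pi.single i 1 : Fin n → ℝ) ⬝ᵥ (A *ᵥ (Pi.single j 1 : Fin n → ℝ)) = A i j := by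
      intro A i j
      rw [Matrix.mulVec_single]
      simp [dotProduct, Pi.single_apply, ite_mul]
    have hww : ∀ w w' : Fin n → ℝ, w ⬝ᵥ (Xᵀ * Y) *ᵥ w' = w ⬝ᵥ (Yᵀ * X) *ᵥ w' := by
      intro w w'
      have h1 : (M *ᵥ w) ∈ lam := by
        rw [← hrange]
        exact ⟨w, rfl⟩
      have h2 : (M *ᵥ w') ∈ lam := by
        rw [← hrange]
        exact ⟨w', rfl⟩
      have h3 := homega _ h1 _ h2
      rw [hMfr, dot_JJ, mulVec_pair_dot, mulVec_pair_dot, sub_eq_zero] at h3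
      exact h3.symm
    have hsym : Xᵀ * Y = Yᵀ * X := by
      ext i j
      have := hww (Pi.single i 1) (Pi.single j 1)
      rwa [hsingledot, hsingledot] at this
    have hinj : ∀ v : Fin n → ℝ, X *ᵥ v = 0 → Y *ᵥ v = 0 → v = 0 := by
      intro v h1 h2
      have hm0 : M.mulVecLin v = 0 := by
        rw [Matrix.mulVecLin_apply, hMfr, fromRows_mulVec, h1, h2]
        funext x
        cases x <;> rfl
      have := hMinj (a₂ := 0) (by rw [hm0, map_zero])
      exact this
    obtain ⟨k, r, s, hk, hrs, a, g, ha, hg, haX, haY⟩ := pair_normal_form n X Y hsym hinj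
    refine ⟨k, r, s, hk, hrs, a, ha, ?_⟩
    have hstep1 : Submodule.map (Matrix.mulVecLin (iota n a)) lam
        = LinearMap.range ((iota n a * M).mulVecLin) := by
      rw [← hrange, Matrix.mulVecLin_mul, LinearMap.range_comp]
    have hiotaM : iota n a * M = fromRows (a * X) ((aᵀ)⁻¹ * Y) := by
      rw [hMfr, iota, fromBlocks_mul_fromRows]
      rw [Matrix.zero_mul, Matrix.zero_mul, add_zero, zero_add]
    have hgsurj : LinearMap.range (g.mulVecLin) = ⊤ := by
      rw [LinearMap.range_eq_top]
      exact Matrix.mulVec_surjective_iff_isUnit.mpr hg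
    have hstep2 : LinearMap.range ((iota n a * M).mulVecLin)
        = LinearMap.range ((iota n a * M * g).mulVecLin) := by
      rw [Matrix.mulVecLin_mul (iota n a * M) g, LinearMap.range_comp_of_range_eq_top _ hgsurj]
    have hfinal : iota n a * M * g = fromRows (diagonal (dVec n k r s)) (diagonal (bVec n k)) := by
      rw [hiotaM, fromRows_mul, haX, haY]
    rw [hstep1, hstep2, hfinal, Vkrs, vkrs_matrix_eq n k r s hrs]
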